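/- arXiv:2208.13852 — 2 statements merged into one kernel-verified Lean document; each statement's English description precedes it below -/
import Mathlib

section
/- If f : H → G is an embedding of undirected graphs (an étale map injective on vertices) with H connected, then the composite ∂(H) ↪ A_H → A_G is injective. -/
namespace GraphPaper

/-- An undirected graph with loose ends (Joyal–Kock style): finite sets of arcs `A`,
darts `D`, vertices `V`, a fixpoint-free involution on arcs, an injection `D → A`,
and a function `t : D → V`. -/
structure UGraph where
  A : Type
  D : Type
  V : Type
  finA : Finite A
  finD : Finite D
  finV : Finite V
  dag : A → A
  dag_invol : Function.Involutive dag
  dag_nofix : ∀ a, dag a ≠ a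
  emb : D → A
  emb_inj : Function.Injective emb
  t : D → V

namespace UGraph

/-- The arc `a` ends at the vertex `v` (i.e. `a` comes from a dart over `v`). -/
def endAt (G : UGraph) (a : G.A) (v : G.V) : Prop := ∃ d, G.emb d = a ∧ G.t d = v

/-- One-step adjacency on the disjoint union of arcs and vertices. -/
def touches (G : UGraph) : G.A ⊕ G.V → G.A ⊕ G.V → Prop
  | .inl a, .inl b => b = G.dag a
  | .inl a, .inr v => G.endAt a v
  | .inr v, .inl a => G.endAt a v
  | .inr _, .inr _ => False

/-- Connectedness: any two elements of `A ⊕ V` are joined by a chain of adjacencies. -/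
def Connected (G : UGraph) : Prop :=
  ∀ x y : G.A ⊕ G.V, Relation.ReflTransGen G.touches x y

end UGraph

/-- An element of an alternating path: an arc or a vertex. -/
inductive Elt (G : UGraph) where
  | arc : G.A → Elt G
  | vtx : G.V → Elt G

namespace UGraph

/-- Consecutive incidence condition in a path: if `a v` appears then `t(a) = v`;
if `v a` appears then `t(a†) = v`. -/
def step (G : UGraph) : Elt G → Elt G → Prop
  | .arc a, .vtx v => G.endAt a v
  | .vtx v, .arc a => G.endAt (G.dag a) v
  | _, _ => False

/-- A path is a finite alternating sequence of arcs and vertices with the incidences. -/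
def IsPath (G : UGraph) (l : List (Elt G)) : Prop := l.Chain' G.step

/-- A cycle is a path of length strictly greater than one beginning and ending at the
same arc or vertex. -/
def IsCycle (G : UGraph) (l : List (Elt G)) : Prop :=
  G.IsPath l ∧ 1 < l.length ∧ l.head? = l.getLast?

/-- A tree is a connected graph with no cycles. -/
def IsTree (G : UGraph) : Prop := G.Connected ∧ ∀ l, ¬ G.IsCycle l

end UGraph

/-- An étale map of undirected graphs: functions on arcs, darts, vertices commuting with
the involutions and the structure maps, such that the dart–vertex square is a pullback. -/
def IsEtaleMap (G H : UGraph) (fA : G.A → H.A) (fD : G.D → H.D) (fV : G.V → H.V) : Prop :=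
  (∀ a, fA (G.dag a) = H.dag (fA a)) ∧
  (∀ d, fA (G.emb d) = H.emb (fD d)) ∧
  (∀ d, fV (G.t d) = H.t (fD d)) ∧
  (∀ (d' : H.D) (v : G.V), H.t d' = fV v → ∃! d : G.D, fD d = d' ∧ G.t d = v)

/-- A subgraph of `G`, determined by a set of edges (encoded as an involution-closed set
of arcs) and a set of vertices, closed in the sense that all darts over a chosen vertex
have their arcs present. -/
structure Subgraph (G : UGraph) where
  arcs : Set G.A
  verts : Set G.V
  arcs_inv : ∀ a ∈ arcs, G.dag a ∈ arcs
  closed : ∀ d : G.D, G.t d ∈ verts → G.emb d ∈ arcs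

namespace Subgraph

variable {G : UGraph}

/-- Membership of an arc-or-vertex in the subgraph. -/
def mem (H : Subgraph G) : G.A ⊕ G.V → Prop
  | .inl a => a ∈ H.arcs
  | .inr v => v ∈ H.verts

/-- Adjacency within the subgraph. -/
def touchesIn (H : Subgraph G) (x y : G.A ⊕ G.V) : Prop :=
  H.mem x ∧ H.mem y ∧ G.touches x y

/-- The subgraph is connected. -/
def Conn (H : Subgraph G) : Prop :=
  ∀ x y, H.mem x → H.mem y → Relation.ReflTransGen H.touchesIn x y

/-- The subgraph is nonempty (has an arc or a vertex). -/
def NonemptySub (H : Subgraph G) : Prop := (∃ a, a ∈ H.arcs) ∨ (∃ v, v ∈ H.verts)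

/-- Two subgraphs overlap if they share an edge or a vertex. -/
def Overlap (S T : Subgraph G) : Prop :=
  (∃ a, a ∈ S.arcs ∧ a ∈ T.arcs) ∨ (∃ v, v ∈ S.verts ∧ v ∈ T.verts)

/-- Union of subgraphs. -/
def union (S T : Subgraph G) : Subgraph G where
  arcs := S.arcs ∪ T.arcs
  verts := S.verts ∪ T.verts
  arcs_inv := fun a ha =>
    ha.elim (fun h => Or.inl (S.arcs_inv a h)) (fun h => Or.inr (T.arcs_inv a h))
  closed := fun d hd =>
    hd.elim (fun h => Or.inl (S.closed d h)) (fun h => Or.inr (T.closed d h))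

/-- Intersection of subgraphs. -/
def inter (S T : Subgraph G) : Subgraph G where
  arcs := S.arcs ∩ T.arcs
  verts := S.verts ∩ T.verts
  arcs_inv := fun a ha => ⟨S.arcs_inv a ha.1, T.arcs_inv a ha.2⟩
  closed := fun d hd => ⟨S.closed d hd.1, T.closed d hd.2⟩

/-- The boundary of a subgraph: arcs of the subgraph not supported by a dart of the
subgraph. -/
def bdry (H : Subgraph G) : Set G.A :=
  {a | a ∈ H.arcs ∧ ¬ ∃ d, G.emb d = a ∧ G.t d ∈ H.verts}

/-- A subtree: a nonempty connected subgraph (of a tree). -/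
def IsSubtree (H : Subgraph G) : Prop := H.Conn ∧ H.NonemptySub

end Subgraph

/-- The star subgraph at a vertex `v`: the vertex together with all edges incident to it. -/
def UGraph.starAt (G : UGraph) (v : G.V) : Subgraph G where
  arcs := {a | G.endAt a v ∨ G.endAt (G.dag a) v}
  verts := {v}
  arcs_inv := fun a ha =>
    ha.elim (fun h => Or.inr (show G.endAt (G.dag (G.dag a)) v by rwa [G.dag_invol a]))
      (fun h => Or.inl h)
  closed := fun d hd => Or.inl ⟨d, rfl, hd⟩

/-- `∂(★_v) = nbhd(v)†`: the boundary arcs of the star at `v`. -/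
def UGraph.starBdry (G : UGraph) (v : G.V) : Set G.A :=
  {a | ∃ d, G.t d = v ∧ a = G.dag (G.emb d)}

end GraphPaper

namespace GraphPaper

/-- If both `a` and `a†` are loose (not in the image of `emb`), then the edge `{a, a†}`
is an isolated component: anything reachable from `a` is `a` or `a†`. -/
lemma isolated_edge (H : UGraph) (a : H.A)
    (ha : ¬∃ d, H.emb d = a) (ha' : ¬∃ d, H.emb d = H.dag a) :
    ∀ x, Relation.ReflTransGen H.touches (.inl a) x →
      x = Sum.inl a ∨ x = Sum.inl (H.dag a) := by
  intro x hx
  induction hx with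
  | refl => exact Or.inl rfl
  | @tail c y _ hcy ih =>
    rcases ih with rfl | rfl
    · cases y with
      | inl b =>
        right
        simp only [UGraph.touches] at hcy
        rw [hcy]
      | inr v =>
        exact absurd ⟨hcy.choose, hcy.choose_spec.1⟩ ha
    · cases y with
      | inl b =>
        left
        simp only [UGraph.touches] at hcy
        rw [hcy, H.dag_invol]
      | inr v =>
        exact absurd ⟨hcy.choose, hcy.choose_spec.1⟩ ha'

/-- If `f : H → G` is an embedding of undirected graphs (an étale map injective on
vertices) with `H` connected, then the composite `∂(H) ↪ A_H → A_G` is injective,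
i.e. `fA` is injective on the boundary of `H`. -/

theorem embedding_injective_on_boundary (H G : UGraph)
    (fA : H.A → G.A) (fD : H.D → G.D) (fV : H.V → G.V)
    (h : IsEtaleMap H G fA fD fV) (hV : Function.Injective fV)
    (hconn : H.Connected) :
    Set.InjOn fA ((Set.range H.emb)ᶜ) := by
  obtain ⟨hdag, hemb, ht, hpb⟩ := h
  have hfD : Function.Injective fD := by
    intro d1 d2 hd
    have hv : H.t d2 = H.t d1 := hV (by rw [ht, ht, hd])
    obtain ⟨d, _, hu⟩ := hpb (fD d1) (H.t d1) (ht d1).symm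
    have h1 := hu d1 ⟨rfl, rfl⟩
    have h2 := hu d2 ⟨hd.symm, hv⟩
    rw [h1, h2]
  intro a ha b hb hab
  by_contra hne
  simp only [Set.mem_compl_iff, Set.mem_range] at ha hb
  by_cases h1 : ∃ d, H.emb d = H.dag a
  · by_cases h2 : ∃ d, H.emb d = H.dag b
    · obtain ⟨d1, hd1⟩ := h1
      obtain ⟨d2, hd2⟩ := h2
      have hD : fD d1 = fD d2 := G.emb_inj (by
        rw [← hemb, ← hemb, hd1, hd2, hdag, hdag, hab])
      have := congrArg H.emb (hfD hD)
      rw [hd1, hd2] at this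
      exact hne (H.dag_invol.injective this)
    · have := isolated_edge H b hb h2 _ (hconn (.inl b) (.inl a))
      rcases this with h | h
      · exact hne (Sum.inl.inj h)
      · have hab' : a = H.dag b := Sum.inl.inj h
        have : G.dag (fA b) = fA b := by rw [← hdag, ← hab']; exact hab
        exact G.dag_nofix _ this
  · have := isolated_edge H a ha h1 _ (hconn (.inl a) (.inl b))
    rcases this with h | h
    · exact hne (Sum.inl.inj h).symm
    · have hab' : b = H.dag a := Sum.inl.inj h
      have : G.dag (fA a) = fA a := by rw [← hdag, ← hab']; exact hab.symm
      exact G.dag_nofix _ this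

end GraphPaper
end

section
/- Let S and T be subtrees of an undirected tree G intersecting exactly in a single edge e = [a, a†] with a ∈ ∂(S) and a† ∈ ∂(T), and suppose neither S nor T is an edge. Then the boundary of the union satisfies ∂(S ∪ T) = (∂(S) \ {a}) ⊔ (∂(T) \ {a†}), and this union is disjoint. If S is an edge then ∂(S ∪ T) = ∂(T), and if T is an edge then ∂(S ∪ T) = ∂(S). -/
namespace GraphPaper

section Aux

variable {G : UGraph}

lemma reach_vertex (H : Subgraph G) (b : G.A) {x : G.A ⊕ G.V} {w : G.V}
    (h : Relation.ReflTransGen H.touchesIn x (.inr w))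
    (hx : x = .inl b ∨ x = .inl (G.dag b)) :
    (∃ d, G.emb d = b ∧ G.t d ∈ H.verts) ∨
    (∃ d, G.emb d = G.dag b ∧ G.t d ∈ H.verts) := by
  induction h using Relation.ReflTransGen.head_induction_on with
  | refl => rcases hx with h | h <;> simp at h
  | head hstep _ ih =>
    rename_i x' y' _
    obtain ⟨_, hmy, ht⟩ := hstep
    rcases hx with rfl | rfl
    · cases y' with
      | inl e =>
        have he : e = G.dag b := ht
        exact ih (Or.inr (by rw [he]))
      | inr v =>
        obtain ⟨d, hd1, hd2⟩ := (ht : G.endAt b v)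
        exact Or.inl ⟨d, hd1, hd2 ▸ hmy⟩
    · cases y' with
      | inl e =>
        have he : e = G.dag (G.dag b) := ht
        exact ih (Or.inl (by rw [he, G.dag_invol]))
      | inr v =>
        obtain ⟨d, hd1, hd2⟩ := (ht : G.endAt (G.dag b) v)
        exact Or.inr ⟨d, hd1, hd2 ▸ hmy⟩

lemma reach_arcs (H : Subgraph G) (hv : H.verts = ∅) (b : G.A) {x y : G.A ⊕ G.V}
    (h : Relation.ReflTransGen H.touchesIn x y)
    (hx : x = .inl b ∨ x = .inl (G.dag b)) :
    y = .inl b ∨ y = .inl (G.dag b) := by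
  induction h with
  | refl => exact hx
  | tail hch hstep ih =>
    rename_i c y'
    obtain ⟨_, hmy, ht⟩ := hstep
    rcases ih with rfl | rfl
    · cases y' with
      | inl e => exact Or.inr (by rw [show e = G.dag b from ht])
      | inr v => exact absurd (hmy : v ∈ H.verts) (Set.eq_empty_iff_forall_notMem.mp hv v)
    · cases y' with
      | inl e =>
        exact Or.inl (by rw [show e = G.dag (G.dag b) from ht, G.dag_invol])
      | inr v => exact absurd (hmy : v ∈ H.verts) (Set.eq_empty_iff_forall_notMem.mp hv v)

end Aux

/-- Let `S`, `T` be subtrees of an undirected tree `G` intersecting exactly in the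
single edge `e = [a, a†]`, with `a ∈ ∂(S)` and `a† ∈ ∂(T)`. If neither `S` nor `T` is
an edge (i.e. both have a vertex), then `∂(S ∪ T) = (∂S \ {a}) ⊔ (∂T \ {a†})` and the
union is disjoint. If `S` is an edge (has no vertices) then `∂(S ∪ T) = ∂(T)`, and if
`T` is an edge then `∂(S ∪ T) = ∂(S)`. -/
theorem boundary_of_union (G : UGraph) (hG : G.IsTree)
    (S T : Subgraph G) (hS : S.IsSubtree) (hT : T.IsSubtree) (a : G.A)
    (harcs : S.arcs ∩ T.arcs = {a, G.dag a})
    (hverts : S.verts ∩ T.verts = ∅)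
    (haS : a ∈ S.bdry) (haT : G.dag a ∈ T.bdry) :
    (S.verts.Nonempty → T.verts.Nonempty →
      (S.union T).bdry = (S.bdry \ {a}) ∪ (T.bdry \ {G.dag a}) ∧
      (S.bdry \ {a}) ∩ (T.bdry \ {G.dag a}) = ∅) ∧
    (S.verts = ∅ → (S.union T).bdry = T.bdry) ∧
    (T.verts = ∅ → (S.union T).bdry = S.bdry) := by
  have haST : a ∈ S.arcs ∩ T.arcs := by rw [harcs]; exact Or.inl rfl
  have hdaST : G.dag a ∈ S.arcs ∩ T.arcs := by rw [harcs]; exact Or.inr rfl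
  refine ⟨?_, ?_, ?_⟩
  · intro hSv hTv
    -- a has a dart into T.verts
    obtain ⟨w, hw⟩ := hTv
    have hda : ∃ d, G.emb d = a ∧ G.t d ∈ T.verts := by
      have hchain := hT.1 (.inl a) (.inr w) haST.2 hw
      rcases reach_vertex T a hchain (Or.inl rfl) with h | h
      · exact h
      · exact absurd h haT.2
    obtain ⟨w', hw'⟩ := hSv
    have hdb : ∃ d, G.emb d = G.dag a ∧ G.t d ∈ S.verts := by
      have hchain := hS.1 (.inl (G.dag a)) (.inr w') hdaST.1 hw'
      rcases reach_vertex S (G.dag a) hchain (Or.inl rfl) with h | h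
      · exact h
      · rw [G.dag_invol] at h; exact absurd h haS.2
    constructor
    · ext b
      constructor
      · rintro ⟨hbU, hbn⟩
        have hba : b ≠ a := by
          rintro rfl
          obtain ⟨d, h1, h2⟩ := hda
          exact hbn ⟨d, h1, Or.inr h2⟩
        have hbda : b ≠ G.dag a := by
          rintro rfl
          obtain ⟨d, h1, h2⟩ := hdb
          exact hbn ⟨d, h1, Or.inl h2⟩
        rcases hbU with hb | hb
        · exact Or.inl ⟨⟨hb, fun ⟨d, h1, h2⟩ => hbn ⟨d, h1, Or.inl h2⟩⟩, hba⟩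
        · exact Or.inr ⟨⟨hb, fun ⟨d, h1, h2⟩ => hbn ⟨d, h1, Or.inr h2⟩⟩, hbda⟩
      · rintro (⟨⟨hbS, hno⟩, hba⟩ | ⟨⟨hbT, hno⟩, hbda⟩)
        · refine ⟨Or.inl hbS, ?_⟩
          rintro ⟨d, h1, h2 | h2⟩
          · exact hno ⟨d, h1, h2⟩
          · have hbT : b ∈ T.arcs := h1 ▸ T.closed d h2
            have : b ∈ ({a, G.dag a} : Set G.A) := harcs ▸ ⟨hbS, hbT⟩
            rcases this with rfl | rfl
            · exact hba rfl
            · exact haT.2 ⟨d, h1, h2⟩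
        · refine ⟨Or.inr hbT, ?_⟩
          rintro ⟨d, h1, h2 | h2⟩
          · have hbS : b ∈ S.arcs := h1 ▸ S.closed d h2
            have : b ∈ ({a, G.dag a} : Set G.A) := harcs ▸ ⟨hbS, hbT⟩
            rcases this with rfl | rfl
            · exact haS.2 ⟨d, h1, h2⟩
            · exact hbda rfl
          · exact hno ⟨d, h1, h2⟩
    · ext b
      simp only [Set.mem_inter_iff, Set.mem_diff, Set.mem_singleton_iff,
        Set.mem_empty_iff_false, iff_false]
      rintro ⟨⟨hbS, hba⟩, ⟨hbT, hbda⟩⟩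
      have : b ∈ ({a, G.dag a} : Set G.A) := harcs ▸ ⟨hbS.1, hbT.1⟩
      rcases this with rfl | rfl
      · exact hba rfl
      · exact hbda rfl
  · intro hSv
    have hSsub : S.arcs ⊆ T.arcs := by
      intro b hb
      have hchain := hS.1 (.inl b) (.inl a) hb haST.1
      rcases reach_arcs S hSv b hchain (Or.inl rfl) with h | h
      · rw [Sum.inl.injEq] at h; rw [← h]; exact haST.2
      · rw [Sum.inl.injEq] at h
        have : b = G.dag a := by rw [h, G.dag_invol]
        rw [this]; exact hdaST.2
    have h1 : (S.union T).arcs = T.arcs := Set.union_eq_self_of_subset_left hSsub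
    have h2 : (S.union T).verts = T.verts := by
      show S.verts ∪ T.verts = T.verts
      rw [hSv, Set.empty_union]
    simp only [Subgraph.bdry, h1, h2]
  · intro hTv
    have hTsub : T.arcs ⊆ S.arcs := by
      intro b hb
      have hchain := hT.1 (.inl b) (.inl a) hb haST.2
      rcases reach_arcs T hTv b hchain (Or.inl rfl) with h | h
      · rw [Sum.inl.injEq] at h; rw [← h]; exact haST.1
      · rw [Sum.inl.injEq] at h
        have : b = G.dag a := by rw [h, G.dag_invol]
        rw [this]; exact hdaST.1
    have h1 : (S.union T).arcs = S.arcs := Set.union_eq_self_of_subset_right hTsub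
    have h2 : (S.union T).verts = S.verts := by
      show S.verts ∪ T.verts = S.verts
      rw [hTv, Set.union_empty]
    simp only [Subgraph.bdry, h1, h2]

end GraphPaper
end
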